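/- Let α_1,…,α_n be pairwise distinct elements of a finite field F_q, let δ ∈ F_q, and let k be an integer with 3 ≤ k ≤ n; take r = 1. Then every k×k submatrix of G_2 is nonsingular (equivalently, the code C_2 generated by G_2 is an [n+2,k] MDS code) if and only if both of the following hold: ∑_{s=1}^{k} α_{i_s} ≠ 0 for every k-element subset {i_1,…,i_k} of {1,…,n}, and δ − (∑_{s=1}^{k−1} α_{i_s})² + ∑_{1≤s<t≤k−1} α_{i_s} α_{i_t} ≠ 0 for every (k−1)-element subset {i_1,…,i_{k−1}} of {1,…,n}. -/

import Mathlib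

open Finset Matrix

/-- Elementary symmetric polynomial `σ_t` evaluated at the values `x 0, …, x (m-1)`. -/
def esymmV {F : Type*} [CommRing F] {m : ℕ} (t : ℕ) (x : Fin m → F) : F :=
  ∑ A ∈ Finset.univ.powersetCard t, ∏ i ∈ A, x i

/-- Complete homogeneous symmetric polynomial `S_t` evaluated at `x 0, …, x (m-1)`. -/
def hsymmV {F : Type*} [CommRing F] {m : ℕ} (t : ℕ) (x : Fin m → F) : F :=
  ∑ d ∈ Finset.Nat.antidiagonalTuple m t, ∏ i, x i ^ d i

/-- The exponent of the `i`-th row (0-indexed): the elements of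
`{0,…,k−r−1} ∪ {k−r+1,…,k}` in increasing order. -/
def expo (k r : ℕ) (i : Fin k) : ℕ := if (i : ℕ) < k - r then (i : ℕ) else (i : ℕ) + 1

/-- The Vandermonde product `∏_{i<j} (α_j − α_i)`. -/
def vand {F : Type*} [CommRing F] {n : ℕ} (α : Fin n → F) : F :=
  ∏ i : Fin n, ∏ j ∈ Finset.Ioi i, (α j - α i)

/-- The matrix `G_{r,k}`: rows are `(α_1^e, …, α_n^e)` for
`e ∈ {0,…,k−r−1} ∪ {k−r+1,…,k}` in increasing order. -/
def Grk {F : Type*} [Field F] {n : ℕ} (α : Fin n → F) (k r : ℕ) : Matrix (Fin k) (Fin n) F :=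
  Matrix.of fun i j => α j ^ expo k r i

/-- The matrix `G_1`: `G_{r,k}` with the extra column `(0,…,0,1)ᵀ` appended. -/
def G1 {F : Type*} [Field F] {n : ℕ} (α : Fin n → F) (k r : ℕ) :
    Matrix (Fin k) (Fin (n + 1)) F :=
  Matrix.of fun i j =>
    if hj : (j : ℕ) < n then α ⟨j, hj⟩ ^ expo k r i
    else if (i : ℕ) = k - 1 then 1 else 0

/-- The matrix `G_2`: `G_1` with the extra column `(0,…,0,1,δ)ᵀ` appended
(entry `1` in row `k−1`, i.e. index `k−2`, and `δ` in row `k`, i.e. index `k−1`). -/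
def G2 {F : Type*} [Field F] {n : ℕ} (α : Fin n → F) (k r : ℕ) (δ : F) :
    Matrix (Fin k) (Fin (n + 2)) F :=
  Matrix.of fun i j =>
    if hj : (j : ℕ) < n then α ⟨j, hj⟩ ^ expo k r i
    else if (j : ℕ) = n then (if (i : ℕ) = k - 1 then 1 else 0)
    else (if (i : ℕ) = k - 2 then 1 else if (i : ℕ) = k - 1 then δ else 0)

/-- `u_i = ∏_{j ≠ i} (α_i − α_j)⁻¹`. -/
def uCoef {F : Type*} [Field F] {n : ℕ} (α : Fin n → F) (i : Fin n) : F :=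
  ∏ j ∈ Finset.univ.erase i, (α i - α j)⁻¹

/-- `Λ_{r,i} = ∑_{j=0}^{r} (−1)^j σ_j α_i^{(n−k)+(r−1)−j}`. -/
def Lam {F : Type*} [Field F] {n : ℕ} (α : Fin n → F) (k r : ℕ) (i : Fin n) : F :=
  ∑ j ∈ Finset.range (r + 1), (-1 : F) ^ j * esymmV j α * α i ^ ((n - k) + (r - 1) - j)

/-- Every `k×k` submatrix of `G` is nonsingular. -/
def allSubNonsing {F : Type*} [Field F] {k m : ℕ} (G : Matrix (Fin k) (Fin m) F) : Prop :=
  ∀ c : Fin k → Fin m, Function.Injective c → (G.submatrix id c).det ≠ 0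

/-- The linear code spanned by the rows of `G`. -/
def rowSpan {F : Type*} [Field F] {k m : ℕ} (G : Matrix (Fin k) (Fin m) F) :
    Submodule F (Fin m → F) :=
  Submodule.span F (Set.range fun i => G i)

/-- The dual code `C^⊥ = {x : ∑ x_i c_i = 0 for all c ∈ C}`, as a set. -/
def dualSet {F : Type*} [Field F] {m : ℕ} (C : Set (Fin m → F)) : Set (Fin m → F) :=
  {x | ∀ c ∈ C, ∑ i, x i * c i = 0}

/-- The extended code of `C` with respect to `w`. -/
def extCode {F : Type*} [Field F] {m : ℕ} (C : Set (Fin m → F)) (w : Fin m → F) :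
    Set (Fin (m + 1) → F) :=
  {y | ∃ c ∈ C, (∀ i : Fin m, y (Fin.castSucc i) = c i) ∧ y (Fin.last m) = ∑ i, w i * c i}


open Polynomial

section Aux
variable {R : Type*} [CommRing R]

lemma prod_Ioi_castSucc {M : Type*} [CommMonoid M] {N : ℕ} (g : Fin (N+1) → M) (i : Fin N) :
    ∏ j ∈ Ioi (Fin.castSucc i), g j = (∏ j ∈ Ioi i, g (Fin.castSucc j)) * g (Fin.last N) := by
  rw [← Finset.filter_lt_eq_Ioi, ← Finset.filter_lt_eq_Ioi, Finset.prod_filter,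
    Finset.prod_filter, Fin.prod_univ_castSucc]
  simp [Fin.castSucc_lt_castSucc_iff, Fin.castSucc_lt_last]

lemma Ioi_last_eq {N : ℕ} : (Ioi (Fin.last N)) = (∅ : Finset (Fin (N+1))) := by
  ext j; simp [(Fin.le_last j).not_gt]

lemma vand_snoc {N : ℕ} (y : Fin N → R) (t : R) :
    vand (Fin.snoc y t) = vand y * ∏ i, (t - y i) := by
  unfold vand
  rw [Fin.prod_univ_castSucc, Ioi_last_eq, Finset.prod_empty, mul_one]
  have step : ∀ i : Fin N, (∏ j ∈ Ioi (Fin.castSucc i),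
      ((Fin.snoc y t : Fin (N+1) → R) j - (Fin.snoc y t : Fin (N+1) → R) (Fin.castSucc i)))
      = (∏ j ∈ Ioi i, (y j - y i)) * (t - y i) := by
    intro i
    rw [prod_Ioi_castSucc]
    simp [Fin.snoc_castSucc, Fin.snoc_last]
  rw [Finset.prod_congr rfl fun i _ => step i, Finset.prod_mul_distrib]

lemma vand_map {S : Type*} [CommRing S] (f : R →+* S) {N : ℕ} (x : Fin N → R) :
    vand (fun i => f (x i)) = f (vand x) := by
  unfold vand
  rw [map_prod]
  exact Finset.prod_congr rfl fun i _ => by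
    rw [map_prod]
    exact Finset.prod_congr rfl fun j _ => (map_sub f _ _).symm

lemma det_pow_id {m : ℕ} (x : Fin m → R) :
    (Matrix.of fun i j : Fin m => x j ^ (i : ℕ)).det = vand x := by
  have : (Matrix.of fun i j : Fin m => x j ^ (i : ℕ)) = (Matrix.vandermonde x)ᵀ := by
    ext i j; simp [Matrix.vandermonde]
  rw [this, Matrix.det_transpose, Matrix.det_vandermonde]; rfl

lemma coeffTop {m : ℕ} (x : Fin m → R) :
    (∏ i, (X - C (x i))).coeff m = 1 := by
  nontriviality R
  have hm : (∏ i, (X - C (x i))).Monic :=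
    monic_prod_of_monic _ _ fun i _ => monic_X_sub_C (x i)
  have hd : (∏ i, (X - C (x i))).natDegree = m := by
    rw [natDegree_prod_of_monic _ _ fun i _ => monic_X_sub_C (x i)]
    simp [Polynomial.natDegree_X_sub_C, Polynomial.natDegree_X]
  have := hm.coeff_natDegree
  rwa [hd] at this

lemma coeffA {m : ℕ} (hm : 1 ≤ m) (x : Fin m → R) :
    (∏ i, (X - C (x i))).coeff (m - 1) = -∑ i, x i := by
  have := prod_X_sub_C_coeff_card_pred (Finset.univ : Finset (Fin m)) x (by simp; omega)
  simpa using this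

lemma sum_Ioi_castSucc {M : Type*} [AddCommMonoid M] {N : ℕ} (g : Fin (N+1) → M) (i : Fin N) :
    ∑ j ∈ Ioi (Fin.castSucc i), g j = (∑ j ∈ Ioi i, g (Fin.castSucc j)) + g (Fin.last N) := by
  rw [← Finset.filter_lt_eq_Ioi, ← Finset.filter_lt_eq_Ioi, Finset.sum_filter,
    Finset.sum_filter, Fin.sum_univ_castSucc]
  simp [Fin.castSucc_lt_castSucc_iff, Fin.castSucc_lt_last]

lemma pairSum_snoc {N : ℕ} (x : Fin (N+1) → R) :
    ∑ s, ∑ t ∈ Ioi s, x s * x t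
      = (∑ s : Fin N, ∑ t ∈ Ioi s, x s.castSucc * x t.castSucc)
        + (∑ s : Fin N, x s.castSucc) * x (Fin.last N) := by
  rw [Fin.sum_univ_castSucc (f := fun s => ∑ t ∈ Ioi s, x s * x t), Ioi_last_eq,
    Finset.sum_empty, add_zero]
  have step : ∀ s : Fin N, ∑ t ∈ Ioi (Fin.castSucc s), x (Fin.castSucc s) * x t
      = (∑ t ∈ Ioi s, x s.castSucc * x t.castSucc) + x s.castSucc * x (Fin.last N) :=
    fun s => sum_Ioi_castSucc (fun t => x (Fin.castSucc s) * x t) s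
  rw [Finset.sum_congr rfl fun s _ => step s, Finset.sum_add_distrib, Finset.sum_mul]

lemma coeffB : ∀ {m : ℕ} (x : Fin (m+2) → R),
    (∏ i, (X - C (x i))).coeff m = ∑ s, ∑ t ∈ Ioi s, x s * x t := by
  intro m
  induction m with
  | zero =>
    intro x
    have h2 : (Finset.univ : Finset (Fin 2)) = {0, 1} := by decide
    have hIoi0 : (Ioi (0 : Fin 2)) = {1} := by decide
    have hIoi1 : (Ioi (1 : Fin 2)) = ∅ := by decide
    rw [Fin.prod_univ_two (f := fun i => X - C (x i))]
    rw [Fin.sum_univ_two (f := fun s => ∑ t ∈ Ioi s, x s * x t), hIoi0, hIoi1]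
    simp [Polynomial.mul_coeff_zero]
  | succ m ih =>
    intro x
    rw [Fin.prod_univ_castSucc (f := fun i => X - C (x i))]
    set p := ∏ i : Fin (m+2), (X - C (x (Fin.castSucc i))) with hp
    rw [mul_sub, Polynomial.coeff_sub, Polynomial.coeff_mul_X, Polynomial.coeff_mul_C]
    rw [ih (fun i => x (Fin.castSucc i))]
    have hA : p.coeff (m+1) = -∑ i : Fin (m+2), x (Fin.castSucc i) := by
      have := coeffA (m := m+2) (by omega) (fun i => x (Fin.castSucc i))
      simpa using this
    rw [hA]
    conv_rhs => rw [pairSum_snoc]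
    ring

lemma succAbove_val {m : ℕ} (j' : Fin (m+1)) :
    ((Fin.castSucc (Fin.last m)).succAbove j' : ℕ) = expo (m+1) 1 j' := by
  rcases lt_or_ge (j' : ℕ) m with h | h
  · rw [Fin.succAbove_of_castSucc_lt _ _ (by simp [Fin.lt_def, h])]
    simp [expo, h]
  · have hj : (j' : ℕ) = m := by omega
    rw [Fin.succAbove_of_le_castSucc _ _ (by simp [Fin.le_def, hj])]
    simp [expo, hj]

lemma det_V1 {N : ℕ} (hN : 1 ≤ N) (x : Fin N → R) :
    (Matrix.of fun i j : Fin N => x j ^ expo N 1 i).det = vand x * ∑ i, x i := by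
  obtain ⟨m, rfl⟩ : ∃ m, N = m + 1 := ⟨N - 1, by omega⟩
  clear hN
  set v : Fin (m+2) → Polynomial R := Fin.snoc (fun i => C (x i)) X with hv
  have hdet : (Matrix.vandermonde v).det = C (vand x) * ∏ i, (X - C (x i)) := by
    rw [Matrix.det_vandermonde]
    have h1 : ∏ i : Fin (m+2), ∏ j ∈ Ioi i, (v j - v i) = vand v := rfl
    rw [h1, hv, vand_snoc, vand_map C x]
  set j₀ : Fin (m+2) := Fin.castSucc (Fin.last m) with hj₀
  set D : Fin (m+2) → R := fun j =>
    (Matrix.of fun i j' : Fin (m+1) => x i ^ ((j.succAbove j' : ℕ))).det with hD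
  have hexp : (Matrix.vandermonde v).det
      = ∑ j : Fin (m+2), (-1) ^ ((Fin.last (m+1) : ℕ) + (j : ℕ)) * X ^ (j : ℕ) * C (D j) := by
    rw [Matrix.det_succ_row _ (Fin.last (m+1))]
    refine Finset.sum_congr rfl fun j _ => ?_
    congr 1
    · congr 1
      simp [Matrix.vandermonde, hv, Fin.snoc_last]
    · have hsub : ((Matrix.vandermonde v).submatrix (Fin.last (m+1)).succAbove j.succAbove)
          = (C : R →+* Polynomial R).mapMatrix
            (Matrix.of fun i j' : Fin (m+1) => x i ^ ((j.succAbove j' : ℕ))) := by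
        ext i' j''
        simp [Matrix.vandermonde, hv, Fin.succAbove_last, Fin.snoc_castSucc, map_pow]
      rw [hsub, ← RingHom.map_det]
  have key := congrArg (fun p : Polynomial R => p.coeff m) (hexp.symm.trans hdet)
  simp only [Polynomial.finset_sum_coeff] at key
  have hterm : ∀ j : Fin (m+2),
      ((-1 : Polynomial R) ^ ((Fin.last (m+1) : ℕ) + (j : ℕ)) * X ^ (j : ℕ) * C (D j)).coeff m
      = if j = j₀ then (-1 : R) ^ ((Fin.last (m+1) : ℕ) + (j : ℕ)) * D j else 0 := by
    intro j
    have hrw : ((-1 : Polynomial R) ^ ((Fin.last (m+1) : ℕ) + (j : ℕ)) * X ^ (j : ℕ) * C (D j))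
        = C ((-1 : R) ^ ((Fin.last (m+1) : ℕ) + (j : ℕ)) * D j) * X ^ (j : ℕ) := by
      simp only [_root_.map_mul, _root_.map_pow, map_neg, Polynomial.C_1]; ring
    rw [hrw, Polynomial.coeff_C_mul, Polynomial.coeff_X_pow]
    have : (m = (j : ℕ)) ↔ (j = j₀) := by
      constructor
      · intro h; exact Fin.ext (by simp [hj₀, ← h])
      · intro h; simp [h, hj₀]
    simp only [this]
    split_ifs <;> simp
  rw [Finset.sum_congr rfl fun j _ => hterm j, Finset.sum_ite_eq' Finset.univ j₀] at key
  simp only [Finset.mem_univ, if_true] at key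
  have hcoeffR : (C (vand x) * ∏ i, (X - C (x i))).coeff m = vand x * (-∑ i, x i) := by
    have hq : (∏ i, (X - C (x i))).coeff m = -∑ i, x i := by
      simpa using coeffA (m := m+1) (by omega) x
    rw [Polynomial.coeff_C_mul, hq]
  rw [hcoeffR] at key
  have hDj0 : D j₀ = (Matrix.of fun i j : Fin (m+1) => x j ^ expo (m+1) 1 i).det := by
    have htr : (Matrix.of fun i j' : Fin (m+1) => x i ^ ((j₀.succAbove j' : ℕ)))
        = (Matrix.of fun i j : Fin (m+1) => x j ^ expo (m+1) 1 i)ᵀ := by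
      ext i j'
      simp [hj₀, Matrix.transpose_apply, succAbove_val]
    simp only [hD]
    rw [htr, Matrix.det_transpose]
  have hsign : ((-1 : R) ^ ((Fin.last (m+1) : ℕ) + (j₀ : ℕ))) = -1 := by
    have : ((Fin.last (m+1) : ℕ) + (j₀ : ℕ)) = 2*m + 1 := by simp [hj₀]; omega
    rw [this, pow_succ, pow_mul]; simp
  rw [hsign, hDj0] at key
  linear_combination (-1 : R) * key

def expo2 (m : ℕ) (i : Fin m) : ℕ := if (i : ℕ) < m - 1 then (i : ℕ) else (i : ℕ) + 2

lemma succAbove_expo2 {m : ℕ} (j' : Fin (m+2)) :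
    expo (m+3) 1 ((Fin.castSucc (Fin.last (m+1))).succAbove j') = expo2 (m+2) j' := by
  rcases lt_or_ge (j' : ℕ) (m+1) with h | h
  · rw [Fin.succAbove_of_castSucc_lt _ _ (by simp [Fin.lt_def, h])]
    simp only [expo, expo2, Fin.coe_castSucc]
    split_ifs <;> omega
  · have hj : (j' : ℕ) = m + 1 := by omega
    rw [Fin.succAbove_of_le_castSucc _ _ (by simp [Fin.le_def, hj])]
    simp only [expo, expo2, Fin.val_succ]
    split_ifs <;> omega

lemma expo_eq_iff {m : ℕ} (i : Fin (m+3)) :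
    expo (m+3) 1 i = m + 1 ↔ i = Fin.castSucc (Fin.last (m+1)) := by
  unfold expo
  have hv : (i : ℕ) < m + 3 := i.isLt
  constructor
  · intro h
    apply Fin.ext
    simp only [Fin.coe_castSucc, Fin.val_last]
    split_ifs at h <;> omega
  · intro h
    subst h
    simp only [Fin.coe_castSucc, Fin.val_last]
    have : m + 1 < m + 3 - 1 := by omega
    rw [if_pos this]

lemma det_V2 {N : ℕ} (hN : 2 ≤ N) (x : Fin N → R) :
    (Matrix.of fun i j : Fin N => x j ^ expo2 N i).det
      = vand x * ((∑ i, x i) ^ 2 - ∑ s, ∑ t ∈ Ioi s, x s * x t) := by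
  obtain ⟨m, rfl⟩ : ∃ m, N = m + 2 := ⟨N - 2, by omega⟩
  clear hN
  set v : Fin (m+3) → Polynomial R := Fin.snoc (fun i => C (x i)) X with hv
  set B : Matrix (Fin (m+3)) (Fin (m+3)) (Polynomial R) :=
    Matrix.of fun i j => v j ^ expo (m+3) 1 i with hB
  have hdet : B.det = C (vand x) * (∏ i, (X - C (x i))) * (X + C (∑ i, x i)) := by
    rw [hB, det_V1 (by omega) v, hv, vand_snoc, vand_map C x]
    have hsum : ∑ j : Fin (m+3), (Fin.snoc (fun i => C (x i)) X : Fin (m+3) → Polynomial R) j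
        = X + C (∑ i, x i) := by
      rw [Fin.sum_univ_castSucc]
      simp only [Fin.snoc_castSucc, Fin.snoc_last]
      rw [← map_sum]
      ring
    rw [hsum]
  set i₀ : Fin (m+3) := Fin.castSucc (Fin.last (m+1)) with hi₀
  set E : Fin (m+3) → R := fun i =>
    (Matrix.of fun i' j' : Fin (m+2) => x j' ^ expo (m+3) 1 (i.succAbove i')).det with hE
  have hexp : B.det = ∑ i : Fin (m+3),
      (-1) ^ ((i : ℕ) + ((Fin.last (m+2) : ℕ))) * X ^ expo (m+3) 1 i * C (E i) := by
    rw [Matrix.det_succ_column _ (Fin.last (m+2))]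
    refine Finset.sum_congr rfl fun i _ => ?_
    congr 1
    · congr 1
      simp [hB, hv, Fin.snoc_last]
    · have hsub : (B.submatrix i.succAbove (Fin.last (m+2)).succAbove)
          = (C : R →+* Polynomial R).mapMatrix
            (Matrix.of fun i' j' : Fin (m+2) => x j' ^ expo (m+3) 1 (i.succAbove i')) := by
        ext i' j''
        simp [hB, hv, Fin.succAbove_last, Fin.snoc_castSucc, map_pow]
      rw [hsub, ← RingHom.map_det]
  have key := congrArg (fun p : Polynomial R => p.coeff (m+1)) (hexp.symm.trans hdet)
  simp only [Polynomial.finset_sum_coeff] at key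
  have hterm : ∀ i : Fin (m+3),
      ((-1 : Polynomial R) ^ ((i : ℕ) + ((Fin.last (m+2) : ℕ))) * X ^ expo (m+3) 1 i
        * C (E i)).coeff (m+1)
      = if i = i₀ then (-1 : R) ^ ((i : ℕ) + ((Fin.last (m+2) : ℕ))) * E i else 0 := by
    intro i
    have hrw : ((-1 : Polynomial R) ^ ((i : ℕ) + ((Fin.last (m+2) : ℕ))) * X ^ expo (m+3) 1 i
        * C (E i))
        = C ((-1 : R) ^ ((i : ℕ) + ((Fin.last (m+2) : ℕ))) * E i) * X ^ expo (m+3) 1 i := by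
      simp only [_root_.map_mul, _root_.map_pow, map_neg, Polynomial.C_1]; ring
    rw [hrw, Polynomial.coeff_C_mul, Polynomial.coeff_X_pow]
    have hiff : (m + 1 = expo (m+3) 1 i) ↔ (i = i₀) := by
      rw [hi₀, ← expo_eq_iff i, eq_comm]
    simp only [hiff]
    split_ifs <;> simp
  rw [Finset.sum_congr rfl fun i _ => hterm i, Finset.sum_ite_eq' Finset.univ i₀] at key
  simp only [Finset.mem_univ, if_true] at key
  have hq1 : (∏ i : Fin (m+2), (X - C (x i))).coeff (m+1) = -∑ i, x i := by
    simpa using coeffA (m := m+2) (by omega) x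
  have hq2 : (∏ i : Fin (m+2), (X - C (x i))).coeff m = ∑ s, ∑ t ∈ Ioi s, x s * x t := coeffB x
  have hcoeffR : (C (vand x) * (∏ i : Fin (m+2), (X - C (x i))) * (X + C (∑ i, x i))).coeff (m+1)
      = vand x * ((∑ s, ∑ t ∈ Ioi s, x s * x t) - (∑ i, x i) ^ 2) := by
    rw [mul_assoc, Polynomial.coeff_C_mul, mul_add, Polynomial.coeff_add,
      Polynomial.coeff_mul_X, Polynomial.coeff_mul_C, hq1, hq2]
    ring
  rw [hcoeffR] at key
  have hEi0 : E i₀ = (Matrix.of fun i j : Fin (m+2) => x j ^ expo2 (m+2) i).det := by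
    simp only [hE, hi₀]
    congr 1
    ext i' j'
    simp only [Matrix.of_apply]
    rw [succAbove_expo2]
  have hsign : ((-1 : R) ^ ((i₀ : ℕ) + ((Fin.last (m+2) : ℕ)))) = -1 := by
    have h23 : ((i₀ : ℕ) + ((Fin.last (m+2)) : ℕ)) = 2*(m+1) + 1 := by simp [hi₀]; omega
    rw [h23, pow_succ, pow_mul]; simp
  rw [hsign, hEi0] at key
  linear_combination (-1 : R) * key

end Aux

section FieldPart
variable {F : Type*} [Field F] {n : ℕ}

lemma vand_ne_zero {N : ℕ} {x : Fin N → F} (hx : Function.Injective x) : vand x ≠ 0 := by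
  unfold vand
  rw [Finset.prod_ne_zero_iff]
  intro i _
  rw [Finset.prod_ne_zero_iff]
  intro j hj
  have hij : i < j := Finset.mem_Ioi.mp hj
  exact sub_ne_zero.mpr fun h => absurd (hx h) (ne_of_gt hij)

lemma succAbove_i1_val {m : ℕ} (i' : Fin (m+2)) :
    (((Fin.castSucc (Fin.last (m+1))).succAbove i' : Fin (m+3)) : ℕ)
      = if (i' : ℕ) < m+1 then (i' : ℕ) else m+2 := by
  rcases lt_or_ge (i' : ℕ) (m+1) with h | h
  · rw [Fin.succAbove_of_castSucc_lt _ _ (by simp [Fin.lt_def, h])]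
    simp [h]
  · have hj : (i' : ℕ) = m + 1 := by omega
    rw [Fin.succAbove_of_le_castSucc _ _ (by simp [Fin.le_def, hj])]
    simp [hj]

variable (α : Fin n → F) (δ : F)

lemma detA {m : ℕ} (c : Fin (m+3) → Fin (n+2)) (c' : Fin (m+3) → Fin n)
    (hcc : ∀ s, (c s : ℕ) = (c' s : ℕ)) :
    ((G2 α (m+3) 1 δ).submatrix id c).det
      = vand (fun s => α (c' s)) * ∑ s, α (c' s) := by
  have hmat : (G2 α (m+3) 1 δ).submatrix id c
      = Matrix.of (fun i s => α (c' s) ^ expo (m+3) 1 i) := by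
    ext i s
    have h1 : (c s : ℕ) < n := by rw [hcc]; exact (c' s).isLt
    simp only [Matrix.submatrix_apply, id_eq, G2, Matrix.of_apply]
    rw [dif_pos h1]
    congr 2
    exact Fin.ext (hcc s)
  rw [hmat, det_V1 (by omega)]

lemma detB {m : ℕ} (c : Fin (m+3) → Fin (n+2)) (c' : Fin (m+2) → Fin n)
    (hlast : (c (Fin.last (m+2)) : ℕ) = n)
    (hcc : ∀ s : Fin (m+2), (c s.castSucc : ℕ) = (c' s : ℕ)) :
    ((G2 α (m+3) 1 δ).submatrix id c).det = vand (fun s => α (c' s)) := by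
  set A := (G2 α (m+3) 1 δ).submatrix id c with hA
  have hcol : ∀ i : Fin (m+3), A i (Fin.last (m+2)) = if (i : ℕ) = m+2 then 1 else 0 := by
    intro i
    simp only [hA, Matrix.submatrix_apply, id_eq, G2, Matrix.of_apply]
    rw [dif_neg (by omega), if_pos hlast]
    norm_num
  rw [Matrix.det_succ_column A (Fin.last (m+2))]
  rw [Finset.sum_eq_single (Fin.last (m+2))]
  · rw [hcol]
    rw [if_pos (by simp)]
    have hminor : A.submatrix (Fin.last (m+2)).succAbove (Fin.last (m+2)).succAbove
        = Matrix.of (fun i' s : Fin (m+2) => α (c' s) ^ (i' : ℕ)) := by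
      ext i' s
      simp only [Matrix.submatrix_apply, Fin.succAbove_last, hA, id_eq, G2, Matrix.of_apply]
      have h1 : (c (Fin.castSucc s) : ℕ) < n := by rw [hcc]; exact (c' s).isLt
      rw [dif_pos h1]
      have he : expo (m+3) 1 (Fin.castSucc i') = (i' : ℕ) := by
        simp only [expo, Fin.coe_castSucc]
        rw [if_pos (by omega)]
      rw [he]
      congr 2
      exact Fin.ext (hcc s)
    rw [hminor, det_pow_id]
    have hsign : ((-1 : F) ^ (((Fin.last (m+2)) : ℕ) + ((Fin.last (m+2)) : ℕ))) = 1 := by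
      simp only [Fin.val_last, ← two_mul, pow_mul]
      simp
    rw [hsign]
    ring
  · intro i _ hi
    rw [hcol, if_neg (fun h => hi (Fin.ext (by simpa using h)))]
    ring
  · intro h
    exact absurd (Finset.mem_univ _) h

lemma detC {m : ℕ} (c : Fin (m+3) → Fin (n+2)) (c' : Fin (m+2) → Fin n)
    (hlast : (c (Fin.last (m+2)) : ℕ) = n+1)
    (hcc : ∀ s : Fin (m+2), (c s.castSucc : ℕ) = (c' s : ℕ)) :
    ((G2 α (m+3) 1 δ).submatrix id c).det
      = vand (fun s => α (c' s))
        * (δ - (∑ s, α (c' s)) ^ 2 + ∑ s, ∑ t ∈ Ioi s, α (c' s) * α (c' t)) := by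
  set A := (G2 α (m+3) 1 δ).submatrix id c with hA
  set i₁ : Fin (m+3) := Fin.castSucc (Fin.last (m+1)) with hi₁
  have hcol : ∀ i : Fin (m+3), A i (Fin.last (m+2))
      = if (i : ℕ) = m+1 then 1 else if (i : ℕ) = m+2 then δ else 0 := by
    intro i
    simp only [hA, Matrix.submatrix_apply, id_eq, G2, Matrix.of_apply]
    rw [dif_neg (by omega), if_neg (by omega)]
    simp only [show m+3-2 = m+1 by omega, show m+3-1 = m+2 by omega]
  have hminor2 : A.submatrix (Fin.last (m+2)).succAbove (Fin.last (m+2)).succAbove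
      = Matrix.of (fun i' s : Fin (m+2) => α (c' s) ^ (i' : ℕ)) := by
    ext i' s
    simp only [Matrix.submatrix_apply, Fin.succAbove_last, hA, id_eq, G2, Matrix.of_apply]
    have h1 : (c (Fin.castSucc s) : ℕ) < n := by rw [hcc]; exact (c' s).isLt
    rw [dif_pos h1]
    have he : expo (m+3) 1 (Fin.castSucc i') = (i' : ℕ) := by
      simp only [expo, Fin.coe_castSucc]
      rw [if_pos (by omega)]
    rw [he]
    congr 2
    exact Fin.ext (hcc s)
  have hminor1 : A.submatrix i₁.succAbove (Fin.last (m+2)).succAbove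
      = Matrix.of (fun i' s : Fin (m+2) => α (c' s) ^ expo2 (m+2) i') := by
    ext i' s
    simp only [Matrix.submatrix_apply, Fin.succAbove_last, hA, id_eq, G2, Matrix.of_apply]
    have h1 : (c (Fin.castSucc s) : ℕ) < n := by rw [hcc]; exact (c' s).isLt
    rw [dif_pos h1, hi₁, succAbove_expo2]
    congr 2
    exact Fin.ext (hcc s)
  rw [Matrix.det_succ_column A (Fin.last (m+2))]
  rw [Finset.sum_eq_add_of_mem i₁ (Fin.last (m+2)) (Finset.mem_univ _) (Finset.mem_univ _)
    (by rw [hi₁]; exact fun h => by simpa using congrArg Fin.val h) ?_]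
  · rw [hcol, hcol]
    rw [if_pos (by simp [hi₁]), if_neg (by simp), if_pos (by simp)]
    rw [hminor1, hminor2, det_V2 (by omega), det_pow_id]
    have hs1 : ((-1 : F) ^ (((i₁ : ℕ)) + ((Fin.last (m+2)) : ℕ))) = -1 := by
      rw [show ((i₁ : ℕ)) + ((Fin.last (m+2)) : ℕ) = 2*(m+1)+1 from by simp [hi₁]; omega]
      rw [pow_succ, pow_mul]; simp
    have hs2 : ((-1 : F) ^ (((Fin.last (m+2)) : ℕ) + ((Fin.last (m+2)) : ℕ))) = 1 := by
      simp only [Fin.val_last, ← two_mul, pow_mul]; simp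
    rw [hs1, hs2]
    ring
  · intro i _ hi
    obtain ⟨hi1, hi2⟩ := hi
    rw [hcol, if_neg (fun h => hi1 (Fin.ext (by simpa [hi₁] using h))),
      if_neg (fun h => hi2 (Fin.ext (by simpa using h)))]
    ring

lemma detD {m : ℕ} (c : Fin (m+3) → Fin (n+2)) (c' : Fin (m+1) → Fin n)
    (hlast : (c (Fin.last (m+2)) : ℕ) = n+1)
    (hm1 : (c (Fin.castSucc (Fin.last (m+1))) : ℕ) = n)
    (hcc : ∀ s : Fin (m+1), (c s.castSucc.castSucc : ℕ) = (c' s : ℕ)) :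
    ((G2 α (m+3) 1 δ).submatrix id c).det = - vand (fun s => α (c' s)) := by
  set A := (G2 α (m+3) 1 δ).submatrix id c with hA
  set i₁ : Fin (m+3) := Fin.castSucc (Fin.last (m+1)) with hi₁
  have hcol : ∀ i : Fin (m+3), A i (Fin.last (m+2))
      = if (i : ℕ) = m+1 then 1 else if (i : ℕ) = m+2 then δ else 0 := by
    intro i
    simp only [hA, Matrix.submatrix_apply, id_eq, G2, Matrix.of_apply]
    rw [dif_neg (by omega), if_neg (by omega)]
    simp only [show m+3-2 = m+1 by omega, show m+3-1 = m+2 by omega]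
  rw [Matrix.det_succ_column A (Fin.last (m+2))]
  rw [Finset.sum_eq_add_of_mem i₁ (Fin.last (m+2)) (Finset.mem_univ _) (Finset.mem_univ _)
    (by rw [hi₁]; exact fun h => by simpa using congrArg Fin.val h) ?_]
  · -- second term vanishes: its minor has a zero column
    have hzero : (A.submatrix (Fin.last (m+2)).succAbove (Fin.last (m+2)).succAbove).det = 0 := by
      apply Matrix.det_eq_zero_of_column_eq_zero (Fin.last (m+1))
      intro i'
      simp only [Matrix.submatrix_apply, Fin.succAbove_last, hA, id_eq, G2, Matrix.of_apply]
      rw [dif_neg (by rw [hm1]; omega), if_pos (by rw [hm1])]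
      rw [if_neg (by simp; omega)]
    -- first term: expand the minor along its last column
    set M := A.submatrix i₁.succAbove (Fin.last (m+2)).succAbove with hM
    have hMcol : ∀ i' : Fin (m+2), M i' (Fin.last (m+1))
        = if (i' : ℕ) = m+1 then 1 else 0 := by
      intro i'
      simp only [hM, Matrix.submatrix_apply, Fin.succAbove_last, hA, id_eq, G2, Matrix.of_apply]
      rw [dif_neg (by rw [← hi₁, hm1]; omega), if_pos (by rw [← hi₁, hm1])]
      rcases Nat.lt_or_ge (i' : ℕ) (m+1) with h | h
      · rw [if_neg (by rw [hi₁, succAbove_i1_val, if_pos h]; omega), if_neg (by omega)]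
      · have h' : (i' : ℕ) = m+1 := by omega
        rw [if_pos (by rw [hi₁, succAbove_i1_val, if_neg (by omega)]; omega), if_pos h']
    have hMdet : M.det = vand (fun s => α (c' s)) := by
      rw [Matrix.det_succ_column M (Fin.last (m+1))]
      rw [Finset.sum_eq_single (Fin.last (m+1))]
      · rw [hMcol, if_pos (by simp)]
        have hminor : M.submatrix (Fin.last (m+1)).succAbove (Fin.last (m+1)).succAbove
            = Matrix.of (fun i'' s : Fin (m+1) => α (c' s) ^ (i'' : ℕ)) := by
          ext i'' s
          simp only [hM, Matrix.submatrix_apply, Fin.succAbove_last, hA, id_eq, G2,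
            Matrix.of_apply]
          have h1 : (c s.castSucc.castSucc : ℕ) < n := by rw [hcc]; exact (c' s).isLt
          rw [dif_pos h1]
          have he : expo (m+3) 1 (i₁.succAbove (Fin.castSucc i'')) = (i'' : ℕ) := by
            rw [hi₁, succAbove_expo2]
            simp only [expo2, Fin.coe_castSucc]
            rw [if_pos (by omega)]
          rw [he]
          congr 2
          exact Fin.ext (hcc s)
        rw [hminor, det_pow_id]
        have hs2 : ((-1 : F) ^ (((Fin.last (m+1)) : ℕ) + ((Fin.last (m+1)) : ℕ))) = 1 := by
          simp only [Fin.val_last, ← two_mul, pow_mul]; simp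
        rw [hs2]
        ring
      · intro i' _ hi'
        rw [hMcol, if_neg (fun h => hi' (Fin.ext (by simpa using h)))]
        ring
      · intro h
        exact absurd (Finset.mem_univ _) h
    rw [hzero, hcol, hcol]
    rw [if_pos (by simp [hi₁]), hMdet]
    have hs1 : ((-1 : F) ^ (((i₁ : ℕ)) + ((Fin.last (m+2)) : ℕ))) = -1 := by
      rw [show ((i₁ : ℕ)) + ((Fin.last (m+2)) : ℕ) = 2*(m+1)+1 from by simp [hi₁]; omega]
      rw [pow_succ, pow_mul]; simp
    rw [hs1]
    ring
  · intro i _ hi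
    obtain ⟨hi1, hi2⟩ := hi
    rw [hcol, if_neg (fun h => hi1 (Fin.ext (by simpa [hi₁] using h))),
      if_neg (fun h => hi2 (Fin.ext (by simpa using h)))]
    ring

lemma det_comp_perm_ne_zero_iff {K M : ℕ} (G : Matrix (Fin K) (Fin M) F)
    (c : Fin K → Fin M) (σ : Equiv.Perm (Fin K)) :
    (G.submatrix id (c ∘ σ)).det ≠ 0 ↔ (G.submatrix id c).det ≠ 0 := by
  have h : G.submatrix id (c ∘ σ) = (G.submatrix id c).submatrix id σ := rfl
  rw [h, Matrix.det_permute']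
  rcases Int.units_eq_one_or (Equiv.Perm.sign σ) with hs | hs <;> simp [hs]

end FieldPart

/-- Proposition 5.6: for `r = 1`, the code `C_2` generated by `G_2` is MDS
(every `k×k` submatrix of `G_2` is nonsingular) iff `∑_{s=1}^{k} α_{i_s} ≠ 0` for every
`k`-element subset and `δ − (∑_{s} α_{i_s})² + ∑_{s<t} α_{i_s} α_{i_t} ≠ 0` for every
`(k−1)`-element subset. -/
theorem C2_MDS_iff_r1 {F : Type*} [Field F] [Fintype F] {n : ℕ}
    (α : Fin n → F) (hα : Function.Injective α) (δ : F) (k : ℕ)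
    (hk : 3 ≤ k) (hkn : k ≤ n) :
    allSubNonsing (G2 α k 1 δ) ↔
      ((∀ c : Fin k → Fin n, Function.Injective c → ∑ s, α (c s) ≠ 0) ∧
       (∀ c : Fin (k - 1) → Fin n, Function.Injective c →
          δ - (∑ s, α (c s)) ^ 2
            + ∑ s : Fin (k - 1), ∑ t ∈ Finset.Ioi s, α (c s) * α (c t) ≠ 0)) := by
  obtain ⟨m, rfl⟩ : ∃ m, k = m + 3 := ⟨k - 3, by omega⟩
  show _ ↔ ((∀ c : Fin (m+3) → Fin n, Function.Injective c → ∑ s, α (c s) ≠ 0) ∧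
       (∀ c : Fin (m+2) → Fin n, Function.Injective c →
          δ - (∑ s, α (c s)) ^ 2
            + ∑ s : Fin (m+2), ∑ t ∈ Finset.Ioi s, α (c s) * α (c t) ≠ 0))
  have hαinj : ∀ {N : ℕ} (c' : Fin N → Fin n), Function.Injective c' →
      Function.Injective (fun s => α (c' s)) := fun c' hc' => hα.comp hc'
  constructor
  · intro H
    constructor
    · -- condition 1
      intro c hc
      set chat : Fin (m+3) → Fin (n+2) := fun s => ⟨(c s : ℕ), by omega⟩ with hch
      have hinj : Function.Injective chat := by
        intro a b hab
        exact hc (Fin.ext (by simpa [hch] using congrArg Fin.val hab))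
      have hd := H chat hinj
      rw [detA α δ chat c (fun s => rfl)] at hd
      intro h0
      exact hd (by rw [h0, mul_zero])
    · -- condition 2
      intro c hc
      set chat : Fin (m+3) → Fin (n+2) := fun s =>
        if h : (s : ℕ) < m+2 then ⟨(c ⟨s, h⟩ : ℕ), by omega⟩ else ⟨n+1, by omega⟩ with hch
      have hinj : Function.Injective chat := by
        intro a b hab
        have hval := congrArg Fin.val hab
        by_cases ha : (a : ℕ) < m+2 <;> by_cases hb : (b : ℕ) < m+2
        · rw [hch] at hval
          simp only [dif_pos ha, dif_pos hb] at hval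
          have := hc (Fin.ext hval)
          exact Fin.ext (by simpa using congrArg Fin.val this)
        · rw [hch] at hval
          simp only [dif_pos ha, dif_neg hb] at hval
          exact absurd hval (by have := (c ⟨a, ha⟩).isLt; omega)
        · rw [hch] at hval
          simp only [dif_neg ha, dif_pos hb] at hval
          exact absurd hval.symm (by have := (c ⟨b, hb⟩).isLt; omega)
        · exact Fin.ext (by omega)
      have hlast : (chat (Fin.last (m+2)) : ℕ) = n + 1 := by
        simp only [hch]
        have hcond : ¬ (((Fin.last (m+2)) : ℕ) < m + 2) := by
          rw [Fin.val_last]; omega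
        rw [dif_neg hcond]
      have hcc : ∀ s : Fin (m+2), (chat s.castSucc : ℕ) = (c s : ℕ) := by
        intro s
        have h2 : ((s.castSucc : ℕ)) < m + 2 := by simpa using s.isLt
        simp only [hch]
        rw [dif_pos h2]
        exact congrArg (fun t : Fin (m+2) => ((c t : ℕ)))
          (Fin.ext (by simp) : (⟨(s.castSucc : ℕ), h2⟩ : Fin (m+2)) = s)
      have hd := H chat hinj
      rw [detC α δ chat c hlast hcc] at hd
      intro h0
      exact hd (by rw [h0, mul_zero])
  · rintro ⟨H1, H2⟩ c hc
    by_cases hN1 : ∃ a, (c a : ℕ) = n + 1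
    · obtain ⟨a, ha⟩ := hN1
      by_cases hN : ∃ b, (c b : ℕ) = n
      · -- both n and n+1 present
        obtain ⟨b, hb⟩ := hN
        set σ1 : Equiv.Perm (Fin (m+3)) := Equiv.swap a (Fin.last (m+2)) with hσ1
        set c1 : Fin (m+3) → Fin (n+2) := c ∘ σ1 with hc1
        set b' : Fin (m+3) := σ1 b with hb'
        have hc1last : (c1 (Fin.last (m+2)) : ℕ) = n + 1 := by
          simp only [hc1, Function.comp_apply, hσ1, Equiv.swap_apply_right, ha]
        have hc1b' : (c1 b' : ℕ) = n := by
          simp only [hc1, hb', hσ1, Function.comp_apply, Equiv.swap_apply_self, hb]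
        have hb'ne : b' ≠ Fin.last (m+2) := by
          intro h; rw [h] at hc1b'; omega
        set i₁ : Fin (m+3) := Fin.castSucc (Fin.last (m+1)) with hi₁
        have hi₁ne : i₁ ≠ Fin.last (m+2) := by
          intro h
          have := congrArg Fin.val h
          simp [hi₁] at this
        set σ2 : Equiv.Perm (Fin (m+3)) := Equiv.swap b' i₁ with hσ2
        set c2 : Fin (m+3) → Fin (n+2) := c1 ∘ σ2 with hc2
        have hcomp : c ∘ ⇑(σ2.trans σ1) = c2 := rfl
        rw [← det_comp_perm_ne_zero_iff (G2 α (m+3) 1 δ) c (σ2.trans σ1), hcomp]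
        have hc2inj : Function.Injective c2 := hc.comp ((σ2.trans σ1)).injective
        have hc2last : (c2 (Fin.last (m+2)) : ℕ) = n + 1 := by
          simp only [hc2, Function.comp_apply, hσ2,
            Equiv.swap_apply_of_ne_of_ne hb'ne.symm hi₁ne.symm]
          exact hc1last
        have hc2i₁ : (c2 i₁ : ℕ) = n := by
          simp only [hc2, Function.comp_apply, hσ2, Equiv.swap_apply_right]
          exact hc1b'
        have hlt : ∀ s : Fin (m+1), (c2 s.castSucc.castSucc : ℕ) < n := by
          intro s
          have h2 : (c2 s.castSucc.castSucc) ≠ c2 (Fin.last (m+2)) := by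
            intro h
            have := hc2inj h
            have := congrArg Fin.val this
            simp at this
            omega
          have h3 : (c2 s.castSucc.castSucc) ≠ c2 i₁ := by
            intro h
            have := hc2inj h
            have := congrArg Fin.val this
            simp [hi₁] at this
            omega
          have h4 : (c2 s.castSucc.castSucc : ℕ) < n + 2 := (c2 _).isLt
          have h5 : (c2 s.castSucc.castSucc : ℕ) ≠ n + 1 := by
            intro h; exact h2 (Fin.ext (by rw [h, hc2last]))
          have h6 : (c2 s.castSucc.castSucc : ℕ) ≠ n := by
            intro h; exact h3 (Fin.ext (by rw [h, hc2i₁]))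
          omega
        set c' : Fin (m+1) → Fin n := fun s => ⟨(c2 s.castSucc.castSucc : ℕ), hlt s⟩ with hc'
        rw [detD α δ c2 c' hc2last hc2i₁ (fun s => rfl)]
        refine neg_ne_zero.mpr (vand_ne_zero (hαinj c' ?_))
        intro s t hst
        have := hc2inj (Fin.ext (by simpa [hc'] using congrArg Fin.val hst))
        exact Fin.castSucc_injective _ (Fin.castSucc_injective _ this)
      · -- only n+1 present
        push_neg at hN
        set σ1 : Equiv.Perm (Fin (m+3)) := Equiv.swap a (Fin.last (m+2)) with hσ1
        set c2 : Fin (m+3) → Fin (n+2) := c ∘ σ1 with hc2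
        rw [← det_comp_perm_ne_zero_iff (G2 α (m+3) 1 δ) c σ1]
        have hc2inj : Function.Injective c2 := hc.comp σ1.injective
        have hc2last : (c2 (Fin.last (m+2)) : ℕ) = n + 1 := by
          simp only [hc2, Function.comp_apply, hσ1, Equiv.swap_apply_right, ha]
        have hlt : ∀ s : Fin (m+2), (c2 s.castSucc : ℕ) < n := by
          intro s
          have h5 : (c2 s.castSucc : ℕ) ≠ n + 1 := by
            intro h
            have : c2 s.castSucc = c2 (Fin.last (m+2)) := Fin.ext (by rw [h, hc2last])
            have := congrArg Fin.val (hc2inj this)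
            simp at this
            omega
          have h6 : (c2 s.castSucc : ℕ) ≠ n := hN _
          have h4 : (c2 s.castSucc : ℕ) < n + 2 := (c2 _).isLt
          omega
        set c' : Fin (m+2) → Fin n := fun s => ⟨(c2 s.castSucc : ℕ), hlt s⟩ with hc'
        rw [detC α δ c2 c' hc2last (fun s => rfl)]
        have hc'inj : Function.Injective c' := by
          intro s t hst
          have := hc2inj (Fin.ext (by simpa [hc'] using congrArg Fin.val hst))
          exact Fin.castSucc_injective _ this
        exact mul_ne_zero (vand_ne_zero (hαinj c' hc'inj)) (H2 c' hc'inj)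
    · push_neg at hN1
      by_cases hN : ∃ b, (c b : ℕ) = n
      · -- only n present
        obtain ⟨b, hb⟩ := hN
        set σ1 : Equiv.Perm (Fin (m+3)) := Equiv.swap b (Fin.last (m+2)) with hσ1
        set c2 : Fin (m+3) → Fin (n+2) := c ∘ σ1 with hc2
        rw [← det_comp_perm_ne_zero_iff (G2 α (m+3) 1 δ) c σ1]
        have hc2inj : Function.Injective c2 := hc.comp σ1.injective
        have hc2last : (c2 (Fin.last (m+2)) : ℕ) = n := by
          simp only [hc2, Function.comp_apply, hσ1, Equiv.swap_apply_right, hb]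
        have hlt : ∀ s : Fin (m+2), (c2 s.castSucc : ℕ) < n := by
          intro s
          have h6 : (c2 s.castSucc : ℕ) ≠ n := by
            intro h
            have : c2 s.castSucc = c2 (Fin.last (m+2)) := Fin.ext (by rw [h, hc2last])
            have := congrArg Fin.val (hc2inj this)
            simp at this
            omega
          have h5 : (c2 s.castSucc : ℕ) ≠ n + 1 := hN1 _
          have h4 : (c2 s.castSucc : ℕ) < n + 2 := (c2 _).isLt
          omega
        set c' : Fin (m+2) → Fin n := fun s => ⟨(c2 s.castSucc : ℕ), hlt s⟩ with hc'
        rw [detB α δ c2 c' hc2last (fun s => rfl)]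
        have hc'inj : Function.Injective c' := by
          intro s t hst
          have := hc2inj (Fin.ext (by simpa [hc'] using congrArg Fin.val hst))
          exact Fin.castSucc_injective _ this
        exact vand_ne_zero (hαinj c' hc'inj)
      · -- neither present
        push_neg at hN
        have hlt : ∀ s, (c s : ℕ) < n := by
          intro s
          have h4 : (c s : ℕ) < n + 2 := (c s).isLt
          have h5 := hN1 s
          have h6 := hN s
          omega
        set c' : Fin (m+3) → Fin n := fun s => ⟨(c s : ℕ), hlt s⟩ with hc'
        rw [detA α δ c c' (fun s => rfl)]
        have hc'inj : Function.Injective c' := by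
          intro s t hst
          exact hc (Fin.ext (by simpa [hc'] using congrArg Fin.val hst))
        exact mul_ne_zero (vand_ne_zero (hαinj c' hc'inj)) (H1 c' hc'inj)
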